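/- Let Q be an orthogonal projection on ℂ^E (where E = 2m + n, m internal edge pairs, n external edges) and define 𝔖_Q := Q^⊥ − Q and the matrix 𝔍 acting as the block matrix with blocks [[0, 1_m, 0],[1_m, 0, 0],[0,0,0_n]] (swapping the two internal blocks, annihilating the external block). Let M_sy := {(c, c, 0) : c ∈ ℂ^m} and M_asy := {(c, −c, 0) : c ∈ ℂ^m}. Then a vector w satisfies 𝔖_Q 𝔍 w = w if and only if w ∈ ((ker Q)^⊥ ∩ M_asy) ⊕ (ker Q ∩ M_sy), and 𝔖_Q 𝔍 w = −w if and only if w ∈ (ker Q ∩ M_asy) ⊕ ((ker Q)^⊥ ∩ M_sy). -/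
import Mathlib


open Matrix

/-- Index type for ℂ^E with E = 2m + n. -/
abbrev GraphIdx (m n : ℕ) := Fin m ⊕ (Fin m ⊕ Fin n)

/-- The matrix 𝔍 swapping the two internal blocks and annihilating the external block. -/
def Jmat (m n : ℕ) : Matrix (GraphIdx m n) (GraphIdx m n) ℂ :=
  Matrix.of fun i j =>
    match i, j with
    | Sum.inl a, Sum.inr (Sum.inl b) => if a = b then 1 else 0
    | Sum.inr (Sum.inl a), Sum.inl b => if a = b then 1 else 0
    | _, _ => 0

/-- Membership in M_sy = {(c,c,0)}. -/
def memMsy {m n : ℕ} (w : GraphIdx m n → ℂ) : Prop :=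
  ∃ c : Fin m → ℂ, w = Sum.elim c (Sum.elim c 0)

/-- Membership in M_asy = {(c,−c,0)}. -/
def memMasy {m n : ℕ} (w : GraphIdx m n → ℂ) : Prop :=
  ∃ c : Fin m → ℂ, w = Sum.elim c (Sum.elim (-c) 0)

lemma jmulVec {m n : ℕ} (w : GraphIdx m n → ℂ) :
    (Jmat m n).mulVec w =
      Sum.elim (fun i => w (Sum.inr (Sum.inl i))) (Sum.elim (fun i => w (Sum.inl i)) 0) := by
  funext i
  rcases i with a | a | a <;>
    simp [Jmat, mulVec, dotProduct, Fintype.sum_sum_type]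

lemma sqS {m n : ℕ} (Q : Matrix (GraphIdx m n) (GraphIdx m n) ℂ) (hQ2 : Q * Q = Q) :
    ((1 : Matrix (GraphIdx m n) (GraphIdx m n) ℂ) - (2:ℂ) • Q) *
      ((1 : Matrix (GraphIdx m n) (GraphIdx m n) ℂ) - (2:ℂ) • Q) = 1 := by
  simp [sub_mul, mul_sub, Matrix.smul_mul, Matrix.mul_smul, hQ2, smul_smul]
  module

lemma key {m n : ℕ} (Q : Matrix (GraphIdx m n) (GraphIdx m n) ℂ)
    (hQ : Qᴴ = Q) (hQ2 : Q * Q = Q) (w : GraphIdx m n → ℂ) :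
    (((1 : Matrix (GraphIdx m n) (GraphIdx m n) ℂ) - (2 : ℂ) • Q) * Jmat m n).mulVec w = w ↔
      ∃ a b : GraphIdx m n → ℂ,
        (Q.mulVec a = a ∧ memMasy a) ∧ (Q.mulVec b = 0 ∧ memMsy b) ∧ w = a + b := by
  constructor
  · intro h
    have hJw : (Jmat m n).mulVec w = w - (2:ℂ) • Q.mulVec w := by
      have h2 : ((1 : Matrix (GraphIdx m n) (GraphIdx m n) ℂ) - (2:ℂ) • Q).mulVec
          ((((1 : Matrix (GraphIdx m n) (GraphIdx m n) ℂ) - (2:ℂ) • Q) * Jmat m n).mulVec w)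
          = ((1 : Matrix (GraphIdx m n) (GraphIdx m n) ℂ) - (2:ℂ) • Q).mulVec w := by rw [h]
      rw [mulVec_mulVec, ← mul_assoc, sqS Q hQ2, one_mul] at h2
      rw [h2, sub_mulVec, one_mulVec, smul_mulVec]
    set a : GraphIdx m n → ℂ := Q.mulVec w with ha_def
    have hJw' : (Sum.elim (fun i => w (Sum.inr (Sum.inl i)))
        (Sum.elim (fun i => w (Sum.inl i)) 0) : GraphIdx m n → ℂ) = w - (2:ℂ) • a := by
      rw [← jmulVec, hJw]
    have e1 : ∀ i, w (Sum.inr (Sum.inl i)) = w (Sum.inl i) - 2 * a (Sum.inl i) := by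
      intro i; have := congrFun hJw' (Sum.inl i); simpa using this
    have e2 : ∀ i, w (Sum.inl i) = w (Sum.inr (Sum.inl i)) - 2 * a (Sum.inr (Sum.inl i)) := by
      intro i; have := congrFun hJw' (Sum.inr (Sum.inl i)); simpa using this
    have e3 : ∀ j, (0:ℂ) = w (Sum.inr (Sum.inr j)) - 2 * a (Sum.inr (Sum.inr j)) := by
      intro j; have := congrFun hJw' (Sum.inr (Sum.inr j)); simpa using this
    have ha2 : ∀ i, a (Sum.inr (Sum.inl i)) = - a (Sum.inl i) := by
      intro i; linear_combination (e1 i + e2 i) / 2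
    have ha3 : ∀ j, a (Sum.inr (Sum.inr j)) = w (Sum.inr (Sum.inr j)) / 2 := by
      intro j; linear_combination (e3 j) / 2
    have haQ : Q.mulVec a = a := by
      rw [ha_def, mulVec_mulVec, hQ2]
    have hb0 : Q.mulVec (w - a) = 0 := by
      rw [mulVec_sub, haQ, ← ha_def, sub_self]
    have horth : star a ⬝ᵥ (w - a) = 0 := by
      calc star a ⬝ᵥ (w - a) = star (Q.mulVec a) ⬝ᵥ (w - a) := by rw [haQ]
        _ = (star a ᵥ* Qᴴ) ⬝ᵥ (w - a) := by rw [star_mulVec]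
        _ = star a ⬝ᵥ Q.mulVec (w - a) := by rw [hQ, ← dotProduct_mulVec]
        _ = 0 := by rw [hb0, dotProduct_zero]
    have hcalc : star a ⬝ᵥ (w - a)
        = ∑ j, star (w (Sum.inr (Sum.inr j))) * w (Sum.inr (Sum.inr j)) / 4 := by
      have t12 : (∑ i, star (a (Sum.inl i)) * (w (Sum.inl i) - a (Sum.inl i)))
          + ∑ i, star (a (Sum.inr (Sum.inl i)))
              * (w (Sum.inr (Sum.inl i)) - a (Sum.inr (Sum.inl i))) = 0 := by
        rw [← Finset.sum_add_distrib]
        apply Finset.sum_eq_zero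
        intro i _
        rw [ha2 i, star_neg]
        linear_combination (-(star (a (Sum.inl i)))) * (e1 i)
      rw [dotProduct, Fintype.sum_sum_type, Fintype.sum_sum_type, ← add_assoc]
      simp only [Pi.star_apply, Pi.sub_apply]
      rw [t12, zero_add]
      apply Finset.sum_congr rfl
      intro j _
      rw [ha3 j, star_div₀]
      simp only [Complex.star_def, map_ofNat]
      ring
    have hsum : ∑ j, Complex.normSq (w (Sum.inr (Sum.inr j))) / 4 = 0 := by
      have h0 : ((∑ j, Complex.normSq (w (Sum.inr (Sum.inr j))) / 4 : ℝ) : ℂ) = 0 := by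
        push_cast
        rw [← horth, hcalc]
        apply Finset.sum_congr rfl
        intro j _
        rw [Complex.star_def, mul_comm, Complex.mul_conj]
      exact_mod_cast h0
    have hext : ∀ j, w (Sum.inr (Sum.inr j)) = 0 := by
      intro j
      have h1 := (Finset.sum_eq_zero_iff_of_nonneg
          (fun j _ => div_nonneg (Complex.normSq_nonneg _)
            (by norm_num))).mp hsum j (Finset.mem_univ j)
      have h2 : Complex.normSq (w (Sum.inr (Sum.inr j))) = 0 := by linarith
      exact Complex.normSq_eq_zero.mp h2
    refine ⟨a, w - a, ⟨haQ, ⟨fun i => a (Sum.inl i), ?_⟩⟩,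
      ⟨hb0, ⟨fun i => w (Sum.inl i) - a (Sum.inl i), ?_⟩⟩, by abel⟩
    · funext x
      rcases x with i | i | j
      · rfl
      · simpa using ha2 i
      · simpa using (by linear_combination (e3 j) / 2 + (hext j) / 2 :
          a (Sum.inr (Sum.inr j)) = 0)
    · funext x
      rcases x with i | i | j
      · rfl
      · simp only [Pi.sub_apply, Sum.elim_inr, Sum.elim_inl]
        linear_combination (e1 i) - (ha2 i)
      · simp only [Pi.sub_apply, Sum.elim_inr]
        have : w (Sum.inr (Sum.inr j)) - a (Sum.inr (Sum.inr j)) = 0 := by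
          linear_combination (hext j) / 2 - (e3 j) / 2
        simpa using this
  · rintro ⟨a, b, ⟨ha, c, rfl⟩, ⟨hb, d, rfl⟩, rfl⟩
    have hJa : (Jmat m n).mulVec (Sum.elim c (Sum.elim (-c) 0))
        = -(Sum.elim c (Sum.elim (-c) 0)) := by
      rw [jmulVec]; funext i; rcases i with i | i | i <;> simp
    have hJb : (Jmat m n).mulVec (Sum.elim d (Sum.elim d 0))
        = Sum.elim d (Sum.elim d 0) := by
      rw [jmulVec]; funext i; rcases i with i | i | i <;> simp
    rw [← mulVec_mulVec, mulVec_add, hJa, hJb, mulVec_add, mulVec_neg, sub_mulVec,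
      sub_mulVec, one_mulVec, one_mulVec, smul_mulVec, smul_mulVec, ha, hb]
    module

theorem stmt4 {m n : ℕ} (Q : Matrix (GraphIdx m n) (GraphIdx m n) ℂ)
    (hQ : Qᴴ = Q) (hQ2 : Q * Q = Q) :
    (∀ w : GraphIdx m n → ℂ,
      (((1 : Matrix (GraphIdx m n) (GraphIdx m n) ℂ) - (2 : ℂ) • Q) * Jmat m n).mulVec w = w ↔
        ∃ a b : GraphIdx m n → ℂ,
          (Q.mulVec a = a ∧ memMasy a) ∧ (Q.mulVec b = 0 ∧ memMsy b) ∧ w = a + b) ∧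
    (∀ w : GraphIdx m n → ℂ,
      (((1 : Matrix (GraphIdx m n) (GraphIdx m n) ℂ) - (2 : ℂ) • Q) * Jmat m n).mulVec w = -w ↔
        ∃ a b : GraphIdx m n → ℂ,
          (Q.mulVec a = 0 ∧ memMasy a) ∧ (Q.mulVec b = b ∧ memMsy b) ∧ w = a + b) := by
  constructor
  · exact key Q hQ hQ2
  · intro w
    set Q' : Matrix (GraphIdx m n) (GraphIdx m n) ℂ := 1 - Q with hQ'def
    have hQ' : Q'ᴴ = Q' := by rw [hQ'def, conjTranspose_sub, conjTranspose_one, hQ]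
    have hQ'2 : Q' * Q' = Q' := by
      rw [hQ'def]
      simp [sub_mul, mul_sub, hQ2]
    have hmat : (1 : Matrix (GraphIdx m n) (GraphIdx m n) ℂ) - (2:ℂ) • Q'
        = -((1 : Matrix (GraphIdx m n) (GraphIdx m n) ℂ) - (2:ℂ) • Q) := by
      rw [hQ'def]; module
    have hk := key Q' hQ' hQ'2 w
    rw [hmat, neg_mul, neg_mulVec, neg_eq_iff_eq_neg] at hk
    rw [hk]
    constructor
    · rintro ⟨a, b, ⟨ha, hma⟩, ⟨hb, hmb⟩, hab⟩
      refine ⟨a, b, ⟨?_, hma⟩, ⟨?_, hmb⟩, hab⟩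
      · rw [hQ'def, sub_mulVec, one_mulVec] at ha
        linear_combination (norm := module) - ha
      · rw [hQ'def, sub_mulVec, one_mulVec] at hb
        linear_combination (norm := module) - hb
    · rintro ⟨a, b, ⟨ha, hma⟩, ⟨hb, hmb⟩, hab⟩
      refine ⟨a, b, ⟨?_, hma⟩, ⟨?_, hmb⟩, hab⟩
      · rw [hQ'def, sub_mulVec, one_mulVec, ha]; module
      · rw [hQ'def, sub_mulVec, one_mulVec, hb]; module
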